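/- Let R be a commutative ring and F ∈ R. Let C₀, C₁, …, C_ℓ be R-modules with R-linear maps d⁺ᵢ : Cᵢ → Cᵢ₋₁ (1 ≤ i ≤ ℓ) satisfying d⁺ᵢ ∘ d⁺ᵢ₊₁ = 0, and assume: (i) for every k ≥ 1, every family fᵢ : Cᵢ → Cᵢ₊ₖ with fᵢ₋₁ ∘ d⁺ᵢ = d⁺ᵢ₊ₖ ∘ fᵢ is null-homotopic (there exist hᵢ : Cᵢ → Cᵢ₊ₖ₊₁ with fᵢ = d⁺ ∘ hᵢ + hᵢ₋₁ ∘ d⁺); (ii) F·id is null-homotopic in the same sense. Suppose d⁻ᵢⱼ and d̃⁻ᵢⱼ : Cᵢ → Cⱼ (for i < j) are two families of maps such that both D = d⁺ + Σd⁻ᵢⱼ and D̃ = d⁺ + Σd̃⁻ᵢⱼ, as endomorphisms of ⊕ᵢ Cᵢ, satisfy D² = F·id and D̃² = F·id. Then there exists an R-linear bijection Ψ of ⊕ᵢ Cᵢ of the form Ψ = id + Σ_{i<j} Ψᵢⱼ with Ψᵢⱼ : Cᵢ → Cⱼ, such that Ψ ∘ D = D̃ ∘ Ψ. -/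

import Mathlib

/-- Composition of "matrices of linear maps" between the terms of a complex indexed by `ℕ`,
with intermediate index truncated at `ℓ` (all modules beyond `ℓ` are assumed trivial, so this
loses no information).  `matComp ℓ g f` represents the composite "first `f`, then `g`". -/
def matComp {R : Type*} [CommRing R] {C : ℕ → Type*}
    [∀ i, AddCommGroup (C i)] [∀ i, Module R (C i)] (ℓ : ℕ)
    (g f : ∀ i j, C i →ₗ[R] C j) : ∀ i j, C i →ₗ[R] C j :=
  fun i j => ∑ m ∈ Finset.range (ℓ + 1), (g m j).comp (f i m)

namespace MFU

variable {R : Type*} [CommRing R] {C : ℕ → Type*}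
    [∀ i, AddCommGroup (C i)] [∀ i, Module R (C i)] {ℓ : ℕ}

theorem lmap_tgt (hC : ∀ i, ℓ < i → Subsingleton (C i)) {i j : ℕ} (h : ℓ < j)
    (f : C i →ₗ[R] C j) : f = 0 := by
  haveI := hC j h
  ext x
  exact Subsingleton.elim _ _

theorem lmap_src (hC : ∀ i, ℓ < i → Subsingleton (C i)) {i j : ℕ} (h : ℓ < i)
    (f : C i →ₗ[R] C j) : f = 0 := by
  haveI := hC i h
  ext x
  rw [Subsingleton.elim x 0, map_zero]
  rfl

theorem matComp_apply (g f : ∀ i j, C i →ₗ[R] C j) (i j : ℕ) (x : C i) :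
    matComp ℓ g f i j x = ∑ m ∈ Finset.range (ℓ + 1), g m j (f i m x) := by
  simp [matComp]

theorem split_left {g g₁ g₂ : ∀ i j, C i →ₗ[R] C j} (f : ∀ i j, C i →ₗ[R] C j)
    (h : ∀ a b, g a b = g₁ a b + g₂ a b) (i j : ℕ) :
    matComp ℓ g f i j = matComp ℓ g₁ f i j + matComp ℓ g₂ f i j := by
  ext x
  simp [matComp_apply, h, Finset.sum_add_distrib]

theorem split_right (g : ∀ i j, C i →ₗ[R] C j) {f f₁ f₂ : ∀ i j, C i →ₗ[R] C j}
    (h : ∀ a b, f a b = f₁ a b + f₂ a b) (i j : ℕ) :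
    matComp ℓ g f i j = matComp ℓ g f₁ i j + matComp ℓ g f₂ i j := by
  ext x
  simp [matComp_apply, h, Finset.sum_add_distrib]

theorem addm_left (g g' f : ∀ i j, C i →ₗ[R] C j) :
    matComp ℓ (g + g') f = matComp ℓ g f + matComp ℓ g' f := by
  funext i j
  exact split_left f (fun a b => rfl) i j

theorem addm_right (g f f' : ∀ i j, C i →ₗ[R] C j) :
    matComp ℓ g (f + f') = matComp ℓ g f + matComp ℓ g f' := by
  funext i j
  exact split_right g (fun a b => rfl) i j

theorem negm_left (g f : ∀ i j, C i →ₗ[R] C j) :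
    matComp ℓ (-g) f = -(matComp ℓ g f) := by
  funext i j
  ext x
  simp [matComp_apply]

theorem negm_right (g f : ∀ i j, C i →ₗ[R] C j) :
    matComp ℓ g (-f) = -(matComp ℓ g f) := by
  funext i j
  ext x
  simp [matComp_apply]

theorem subm_left (g g' f : ∀ i j, C i →ₗ[R] C j) :
    matComp ℓ (g - g') f = matComp ℓ g f - matComp ℓ g' f := by
  rw [sub_eq_add_neg, sub_eq_add_neg, addm_left, negm_left]

theorem subm_right (g f f' : ∀ i j, C i →ₗ[R] C j) :
    matComp ℓ g (f - f') = matComp ℓ g f - matComp ℓ g f' := by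
  rw [sub_eq_add_neg, sub_eq_add_neg, addm_right, negm_right]

theorem smulm_left (c : R) (g f : ∀ i j, C i →ₗ[R] C j) :
    matComp ℓ (c • g) f = c • matComp ℓ g f := by
  funext i j
  ext x
  simp [matComp_apply, Finset.smul_sum]

theorem smulm_right (c : R) (g f : ∀ i j, C i →ₗ[R] C j) :
    matComp ℓ g (c • f) = c • matComp ℓ g f := by
  funext i j
  ext x
  simp [matComp_apply, Finset.smul_sum]

theorem matComp_assoc (h g f : ∀ i j, C i →ₗ[R] C j) :
    matComp ℓ (matComp ℓ h g) f = matComp ℓ h (matComp ℓ g f) := by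
  funext i j
  ext x
  simp only [matComp_apply, map_sum]
  exact Finset.sum_comm

def dl : ∀ i j, C i →ₗ[R] C j := fun i j =>
  if h : i = j then h ▸ (LinearMap.id : C i →ₗ[R] C i) else 0

theorem dl_same (i : ℕ) : (dl : ∀ i j, C i →ₗ[R] C j) i i = LinearMap.id := by
  simp [dl]

theorem dl_ne {i j : ℕ} (h : i ≠ j) : (dl : ∀ i j, C i →ₗ[R] C j) i j = 0 :=
  dif_neg h

theorem matComp_dl_left (hC : ∀ i, ℓ < i → Subsingleton (C i))
    (f : ∀ i j, C i →ₗ[R] C j) : matComp ℓ dl f = f := by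
  funext i j
  by_cases hj : j < ℓ + 1
  · show ∑ m ∈ Finset.range (ℓ + 1), ((dl m j : C m →ₗ[R] C j)).comp (f i m) = f i j
    rw [Finset.sum_eq_single j]
    · rw [dl_same, LinearMap.id_comp]
    · intro m _ hm
      rw [dl_ne hm, LinearMap.zero_comp]
    · intro h
      exact absurd (Finset.mem_range.mpr hj) h
  · rw [lmap_tgt hC (by omega) (f i j)]
    refine Finset.sum_eq_zero fun m hm => ?_
    have : m ≠ j := by simp only [Finset.mem_range] at hm; omega
    rw [dl_ne this, LinearMap.zero_comp]

theorem matComp_dl_right (hC : ∀ i, ℓ < i → Subsingleton (C i))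
    (f : ∀ i j, C i →ₗ[R] C j) : matComp ℓ f dl = f := by
  funext i j
  by_cases hi : i < ℓ + 1
  · show ∑ m ∈ Finset.range (ℓ + 1), (f m j).comp (dl i m) = f i j
    rw [Finset.sum_eq_single i]
    · rw [dl_same, LinearMap.comp_id]
    · intro m _ hm
      rw [dl_ne (Ne.symm hm), LinearMap.comp_zero]
    · intro h
      exact absurd (Finset.mem_range.mpr hi) h
  · rw [lmap_src hC (by omega) (f i j)]
    refine Finset.sum_eq_zero fun m hm => ?_
    have : i ≠ m := by simp only [Finset.mem_range] at hm; omega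
    rw [dl_ne this, LinearMap.comp_zero]


/-- `LB n f` : all components of `f` raise the index by at least `n`. -/
def LB (n : ℕ) (f : ∀ i j, C i →ₗ[R] C j) : Prop :=
  ∀ i j, j < i + n → f i j = 0

theorem LB_mono {a b : ℕ} (h : a ≤ b) {f : ∀ i j, C i →ₗ[R] C j} (hf : LB b f) :
    LB a f := fun i j hj => hf i j (by omega)

theorem LB_comp {a b : ℕ} {f g : ∀ i j, C i →ₗ[R] C j} (hf : LB a f) (hg : LB b g) :
    LB (a + b) (matComp ℓ g f) := by
  intro i j hj
  refine Finset.sum_eq_zero fun m _ => ?_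
  by_cases hm : m < i + a
  · rw [hf i m hm, LinearMap.comp_zero]
  · rw [hg m j (by omega), LinearMap.zero_comp]

theorem LB_comp_d_left {d : ∀ i j, C i →ₗ[R] C j}
    (hddeg : ∀ i j, i ≠ j + 1 → d i j = 0) {n : ℕ} {f : ∀ i j, C i →ₗ[R] C j}
    (hf : LB (n + 1) f) : LB n (matComp ℓ d f) := by
  intro i j hj
  refine Finset.sum_eq_zero fun m _ => ?_
  by_cases hm : m < i + (n + 1)
  · rw [hf i m hm, LinearMap.comp_zero]
  · rw [hddeg m j (by omega), LinearMap.zero_comp]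

theorem LB_comp_d_right {d : ∀ i j, C i →ₗ[R] C j}
    (hddeg : ∀ i j, i ≠ j + 1 → d i j = 0) {n : ℕ} {f : ∀ i j, C i →ₗ[R] C j}
    (hf : LB (n + 1) f) : LB n (matComp ℓ f d) := by
  intro i j hj
  refine Finset.sum_eq_zero fun m _ => ?_
  by_cases hm : i = m + 1
  · rw [hf m j (by omega), LinearMap.zero_comp]
  · rw [hddeg i m hm, LinearMap.comp_zero]

theorem LB_zero (hC : ∀ i, ℓ < i → Subsingleton (C i)) {f : ∀ i j, C i →ₗ[R] C j}
    (h : LB (ℓ + 1) f) : f = 0 := by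
  funext i j
  by_cases hj : j < i + (ℓ + 1)
  · exact h i j hj
  · exact lmap_tgt hC (by omega) (f i j)

/-- the sign operator `(-1)^i` on `C i`. -/
def Jm : ∀ i j, C i →ₗ[R] C j := fun i j => ((-1 : R) ^ i) • dl i j

theorem matComp_Jm_right (hC : ∀ i, ℓ < i → Subsingleton (C i))
    (g : ∀ i j, C i →ₗ[R] C j) :
    matComp ℓ g Jm = fun i j => ((-1 : R) ^ i) • g i j := by
  funext i j
  by_cases hi : i < ℓ + 1
  · ext x
    rw [matComp_apply, Finset.sum_eq_single i]
    · simp [Jm, dl_same, map_smul]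
    · intro m _ hm
      simp [Jm, dl_ne (Ne.symm hm)]
    · intro h
      exact absurd (Finset.mem_range.mpr hi) h
  · have h0 : g i j = 0 := lmap_src hC (by omega) (g i j)
    show matComp ℓ g Jm i j = ((-1 : R) ^ i) • g i j
    rw [h0, smul_zero]
    refine Finset.sum_eq_zero fun m hm => ?_
    have : i ≠ m := by simp only [Finset.mem_range] at hm; omega
    simp [Jm, dl_ne this]

theorem matComp_Jm_left (hC : ∀ i, ℓ < i → Subsingleton (C i))
    (g : ∀ i j, C i →ₗ[R] C j) :
    matComp ℓ Jm g = fun i j => ((-1 : R) ^ j) • g i j := by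
  funext i j
  by_cases hj : j < ℓ + 1
  · ext x
    rw [matComp_apply, Finset.sum_eq_single j]
    · simp [Jm, dl_same]
    · intro m _ hm
      simp [Jm, dl_ne hm]
    · intro h
      exact absurd (Finset.mem_range.mpr hj) h
  · have h0 : g i j = 0 := lmap_tgt hC (by omega) (g i j)
    show matComp ℓ Jm g i j = ((-1 : R) ^ j) • g i j
    rw [h0, smul_zero]
    refine Finset.sum_eq_zero fun m hm => ?_
    have : m ≠ j := by simp only [Finset.mem_range] at hm; omega
    simp [Jm, dl_ne this]

theorem matComp_Jm_Jm (hC : ∀ i, ℓ < i → Subsingleton (C i))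
    (g : ∀ i j, C i →ₗ[R] C j) :
    matComp ℓ (matComp ℓ g Jm) Jm = g := by
  simp only [matComp_Jm_right hC]
  funext i j
  ext x
  rw [LinearMap.smul_apply, LinearMap.smul_apply, smul_smul, ← mul_pow]
  norm_num

theorem Jd_anti (hC : ∀ i, ℓ < i → Subsingleton (C i))
    {d : ∀ i j, C i →ₗ[R] C j} (hddeg : ∀ i j, i ≠ j + 1 → d i j = 0) :
    matComp ℓ Jm d = -matComp ℓ d Jm := by
  rw [matComp_Jm_left hC, matComp_Jm_right hC]
  funext i j
  simp only [Pi.neg_apply]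
  by_cases h : i = j + 1
  · subst h
    rw [pow_succ, mul_neg_one, neg_smul, neg_neg]
  · rw [hddeg i j h]
    simp

theorem step (hC : ∀ i, ℓ < i → Subsingleton (C i))
    {d : ∀ i j, C i →ₗ[R] C j}
    (hddeg : ∀ i j, i ≠ j + 1 → d i j = 0)
    {n : ℕ} (hn : 1 ≤ n)
    (hnull : ∀ k : ℕ, 1 ≤ k → ∀ f : ∀ i j, C i →ₗ[R] C j,
      (∀ i j, j ≠ i + k → f i j = 0) →
      (∀ i j, matComp ℓ f d i j = matComp ℓ d f i j) →
      ∃ h : ∀ i j, C i →ₗ[R] C j,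
        (∀ i j, j ≠ i + k + 1 → h i j = 0) ∧
        (∀ i j, f i j = matComp ℓ d h i j + matComp ℓ h d i j))
    {dm dm' Rm : ∀ i j, C i →ₗ[R] C j}
    (hdm : ∀ i j, ¬ i < j → dm i j = 0)
    (hdm' : ∀ i j, ¬ i < j → dm' i j = 0)
    (hR : LB n Rm)
    (hrel : matComp ℓ (fun a b => d a b + dm' a b) Rm
          + matComp ℓ Rm (fun a b => d a b + dm a b) = 0) :
    ∃ S' : ∀ i j, C i →ₗ[R] C j,
      (∀ i j, j ≠ i + n + 1 → S' i j = 0) ∧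
      matComp ℓ d S' - matComp ℓ S' d
        = (fun i j => if j = i + n then Rm i j else 0) := by
  classical
  set G : ∀ i j, C i →ₗ[R] C j := fun i j => if j = i + n then Rm i j else 0 with hGdef
  set R2 : ∀ i j, C i →ₗ[R] C j := fun i j => if j = i + n then 0 else Rm i j with hR2def
  have hsplit : ∀ a b, Rm a b = G a b + R2 a b := by
    intro a b
    by_cases h : b = a + n <;> simp [hGdef, hR2def, h]
  have hGsupp : ∀ i j, j ≠ i + n → G i j = 0 := by
    intro i j h; simp [hGdef, h]
  have hR2LB : LB (n + 1) R2 := by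
    intro i j hj
    by_cases h : j = i + n
    · simp [hR2def, h]
    · simp only [hR2def]
      rw [if_neg h]
      exact hR i j (by omega)
  have hdmLB : LB 1 dm := fun i j hj => hdm i j (by omega)
  have hdm'LB : LB 1 dm' := fun i j hj => hdm' i j (by omega)
  -- G anticommutes with d
  have hanti : matComp ℓ d G + matComp ℓ G d = 0 := by
    funext i j
    simp only [Pi.add_apply, Pi.zero_apply]
    by_cases hcase : j + 1 = i + n
    · have h0 := congrFun (congrFun hrel i) j
      simp only [Pi.add_apply, Pi.zero_apply] at h0
      have e1 : matComp ℓ (fun a b => d a b + dm' a b) Rm i j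
          = matComp ℓ d Rm i j + matComp ℓ dm' Rm i j :=
        split_left Rm (fun a b => rfl) i j
      have e2 : matComp ℓ Rm (fun a b => d a b + dm a b) i j
          = matComp ℓ Rm d i j + matComp ℓ Rm dm i j :=
        split_right Rm (fun a b => rfl) i j
      have e3 : matComp ℓ d Rm i j = matComp ℓ d G i j + matComp ℓ d R2 i j :=
        split_right d hsplit i j
      have e4 : matComp ℓ Rm d i j = matComp ℓ G d i j + matComp ℓ R2 d i j :=
        split_left d hsplit i j
      have z1 : matComp ℓ d R2 i j = 0 :=
        LB_comp_d_left hddeg hR2LB i j (by omega)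
      have z2 : matComp ℓ R2 d i j = 0 :=
        LB_comp_d_right hddeg hR2LB i j (by omega)
      have z3 : matComp ℓ dm' Rm i j = 0 := LB_comp hR hdm'LB i j (by omega)
      have z4 : matComp ℓ Rm dm i j = 0 := LB_comp hdmLB hR i j (by omega)
      rw [e1, e2, e3, e4, z1, z2, z3, z4] at h0
      simpa using h0
    · have z1 : matComp ℓ d G i j = 0 := by
        refine Finset.sum_eq_zero fun m _ => ?_
        by_cases h2 : m = i + n
        · rw [hddeg m j (by omega), LinearMap.zero_comp]
        · rw [hGsupp i m h2, LinearMap.comp_zero]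
      have z2 : matComp ℓ G d i j = 0 := by
        refine Finset.sum_eq_zero fun m _ => ?_
        by_cases h2 : j = m + n
        · rw [hddeg i m (by omega), LinearMap.comp_zero]
        · rw [hGsupp m j h2, LinearMap.zero_comp]
      rw [z1, z2, add_zero]
  have hGd : matComp ℓ G d = -matComp ℓ d G := by
    have := hanti
    rw [add_comm, add_eq_zero_iff_eq_neg] at this
    exact this
  -- the chain map f := G ∘ J
  have hfJ : matComp ℓ G Jm = fun i j => ((-1 : R) ^ i) • G i j :=
    matComp_Jm_right hC G
  have hfsupp : ∀ i j, j ≠ i + n → ((-1 : R) ^ i) • G i j = 0 := by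
    intro i j h; rw [hGsupp i j h, smul_zero]
  have hchain : matComp ℓ (fun i j => ((-1 : R) ^ i) • G i j) d
      = matComp ℓ d (fun i j => ((-1 : R) ^ i) • G i j) := by
    rw [← hfJ, matComp_assoc, Jd_anti hC hddeg, negm_right, ← matComp_assoc,
      hGd, negm_left, neg_neg, matComp_assoc]
  obtain ⟨h, hhsupp, hhom⟩ := hnull n hn (fun i j => ((-1 : R) ^ i) • G i j)
    hfsupp (fun i j => congrFun (congrFun hchain i) j)
  have hhomm : (fun i j => ((-1 : R) ^ i) • G i j)
      = matComp ℓ d h + matComp ℓ h d := by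
    funext i j
    exact hhom i j
  refine ⟨fun i j => ((-1 : R) ^ i) • h i j, ?_, ?_⟩
  · intro i j hj
    show ((-1 : R) ^ i) • h i j = 0
    rw [hhsupp i j hj, smul_zero]
  · have hSJ : matComp ℓ h Jm = fun i j => ((-1 : R) ^ i) • h i j :=
      matComp_Jm_right hC h
    rw [← hSJ, ← matComp_assoc, matComp_assoc h Jm d, Jd_anti hC hddeg,
      negm_right, ← matComp_assoc, sub_neg_eq_add, ← addm_left, ← hhomm, ← hfJ,
      matComp_Jm_Jm hC]
end MFU

set_option linter.unusedVariables false in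
open MFU in
/-- **Uniqueness lemma for matrix factorization extensions.**  Two completions
`D = d + dm` and `D̃ = d + dm'` of the same positive differential `d` to curved differentials
squaring to `F · id` are conjugate by a unipotent automorphism
`Ψ = id + (strictly index-raising part)`. -/
theorem uniqueness_lemma_matrix_factorization
    {R : Type*} [CommRing R] (F : R) (ℓ : ℕ)
    (C : ℕ → Type*) [∀ i, AddCommGroup (C i)] [∀ i, Module R (C i)]
    (hC : ∀ i, ℓ < i → Subsingleton (C i))
    (d : ∀ i j, C i →ₗ[R] C j)
    (hddeg : ∀ i j, i ≠ j + 1 → d i j = 0)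
    (hdd : ∀ i j, matComp ℓ d d i j = 0)
    (hnull : ∀ k : ℕ, 1 ≤ k → ∀ f : ∀ i j, C i →ₗ[R] C j,
      (∀ i j, j ≠ i + k → f i j = 0) →
      (∀ i j, matComp ℓ f d i j = matComp ℓ d f i j) →
      ∃ h : ∀ i j, C i →ₗ[R] C j,
        (∀ i j, j ≠ i + k + 1 → h i j = 0) ∧
        (∀ i j, f i j = matComp ℓ d h i j + matComp ℓ h d i j))
    (hF : ∃ h : ∀ i j, C i →ₗ[R] C j,
        (∀ i j, j ≠ i + 1 → h i j = 0) ∧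
        (∀ i, F • (LinearMap.id : C i →ₗ[R] C i)
            = matComp ℓ d h i i + matComp ℓ h d i i))
    (dm dm' : ∀ i j, C i →ₗ[R] C j)
    (hdm : ∀ i j, ¬ i < j → dm i j = 0)
    (hdm' : ∀ i j, ¬ i < j → dm' i j = 0)
    (hD : (∀ i, matComp ℓ (fun a b => d a b + dm a b) (fun a b => d a b + dm a b) i i
            = F • (LinearMap.id : C i →ₗ[R] C i)) ∧
          (∀ i j, i ≠ j →
            matComp ℓ (fun a b => d a b + dm a b) (fun a b => d a b + dm a b) i j = 0))
    (hD' : (∀ i, matComp ℓ (fun a b => d a b + dm' a b) (fun a b => d a b + dm' a b) i i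
            = F • (LinearMap.id : C i →ₗ[R] C i)) ∧
          (∀ i j, i ≠ j →
            matComp ℓ (fun a b => d a b + dm' a b) (fun a b => d a b + dm' a b) i j = 0)) :
    ∃ Ψ Ψinv : ∀ i j, C i →ₗ[R] C j,
      (∀ i, Ψ i i = LinearMap.id) ∧
      (∀ i j, j < i → Ψ i j = 0) ∧
      (∀ i, matComp ℓ Ψ Ψinv i i = LinearMap.id) ∧
      (∀ i j, i ≠ j → matComp ℓ Ψ Ψinv i j = 0) ∧
      (∀ i, matComp ℓ Ψinv Ψ i i = LinearMap.id) ∧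
      (∀ i j, i ≠ j → matComp ℓ Ψinv Ψ i j = 0) ∧
      (∀ i j, matComp ℓ Ψ (fun a b => d a b + dm a b) i j
            = matComp ℓ (fun a b => d a b + dm' a b) Ψ i j) := by
  classical
  set Dm : ∀ i j, C i →ₗ[R] C j := fun a b => d a b + dm a b with hDmdef
  set D'm : ∀ i j, C i →ₗ[R] C j := fun a b => d a b + dm' a b with hD'mdef
  have hDD : matComp ℓ Dm Dm = F • (dl : ∀ i j, C i →ₗ[R] C j) := by
    funext i j
    by_cases h : i = j
    · subst h
      rw [hD.1 i]
      rw [Pi.smul_apply, Pi.smul_apply, dl_same]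
    · rw [hD.2 i j h]
      show (0 : C i →ₗ[R] C j) = F • dl i j
      rw [dl_ne h, smul_zero]
  have hDD' : matComp ℓ D'm D'm = F • (dl : ∀ i j, C i →ₗ[R] C j) := by
    funext i j
    by_cases h : i = j
    · subst h
      rw [hD'.1 i]
      rw [Pi.smul_apply, Pi.smul_apply, dl_same]
    · rw [hD'.2 i j h]
      show (0 : C i →ₗ[R] C j) = F • dl i j
      rw [dl_ne h, smul_zero]
  -- the main induction constructing the strictly index-raising part of Ψ
  have key : ∀ n : ℕ, ∃ S : ∀ i j, C i →ₗ[R] C j, LB 1 S ∧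
      LB (n + 1) (matComp ℓ (fun a b => dl a b + S a b) Dm
        - matComp ℓ D'm (fun a b => dl a b + S a b)) := by
    intro n
    induction n with
    | zero =>
      refine ⟨0, fun i j hj => rfl, ?_⟩
      have hz : (fun a b => dl a b + (0 : ∀ i j, C i →ₗ[R] C j) a b)
          = (dl : ∀ i j, C i →ₗ[R] C j) := by
        funext a b; simp
      rw [hz, matComp_dl_left hC, matComp_dl_right hC]
      intro i j hj
      show Dm i j - D'm i j = 0
      simp only [hDmdef, hD'mdef]
      rw [hdm i j (by omega), hdm' i j (by omega)]
      simp
    | succ n ih =>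
      obtain ⟨S, hS1, hSn⟩ := ih
      set Ψ : ∀ i j, C i →ₗ[R] C j := fun a b => dl a b + S a b with hΨdef
      set Rm : ∀ i j, C i →ₗ[R] C j := matComp ℓ Ψ Dm - matComp ℓ D'm Ψ with hRmdef
      have hrel : matComp ℓ D'm Rm + matComp ℓ Rm Dm = 0 := by
        have a1 : matComp ℓ D'm (matComp ℓ Ψ Dm)
            = matComp ℓ (matComp ℓ D'm Ψ) Dm := (matComp_assoc _ _ _).symm
        have a2 : matComp ℓ D'm (matComp ℓ D'm Ψ) = F • Ψ := by
          rw [← matComp_assoc, hDD', smulm_left, matComp_dl_left hC]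
        have a3 : matComp ℓ (matComp ℓ Ψ Dm) Dm = F • Ψ := by
          rw [matComp_assoc, hDD, smulm_right, matComp_dl_right hC]
        rw [hRmdef, subm_right, subm_left, a1, a2, a3]
        abel
      obtain ⟨S', hS'supp, hS'claim⟩ :=
        step hC hddeg (by omega : 1 ≤ n + 1) hnull hdm hdm' hSn hrel
      have hS'LB : LB (n + 2) S' := fun a b hab => hS'supp a b (by omega)
      refine ⟨fun a b => S a b + S' a b, ?_, ?_⟩
      · intro i j hj
        show S i j + S' i j = 0
        rw [hS1 i j hj, hS'supp i j (by omega), add_zero]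
      · show LB (n + 1 + 1) (matComp ℓ (fun a b => dl a b + (S a b + S' a b)) Dm
          - matComp ℓ D'm (fun a b => dl a b + (S a b + S' a b)))
        intro i j hj
        have hgsplit : ∀ a b : ℕ, dl a b + (S a b + S' a b) = Ψ a b + S' a b := by
          intro a b
          simp only [hΨdef]
          exact (add_assoc _ _ _).symm
        have e1 : matComp ℓ (fun a b => dl a b + (S a b + S' a b)) Dm i j
            = matComp ℓ Ψ Dm i j + matComp ℓ S' Dm i j :=
          split_left Dm hgsplit i j
        have e2 : matComp ℓ S' Dm i j
            = matComp ℓ S' d i j + matComp ℓ S' dm i j :=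
          split_right S' (fun a b => by simp only [hDmdef]) i j
        have e3 : matComp ℓ D'm (fun a b => dl a b + (S a b + S' a b)) i j
            = matComp ℓ D'm Ψ i j + matComp ℓ D'm S' i j :=
          split_right D'm hgsplit i j
        have e4 : matComp ℓ D'm S' i j
            = matComp ℓ d S' i j + matComp ℓ dm' S' i j :=
          split_left S' (fun a b => by simp only [hD'mdef]) i j
        have hdmLB : LB 1 dm := fun a b hab => hdm a b (by omega)
        have hdm'LB : LB 1 dm' := fun a b hab => hdm' a b (by omega)
        have z1 : matComp ℓ S' dm i j = 0 :=
          LB_comp hdmLB hS'LB i j (by omega)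
        have z2 : matComp ℓ dm' S' i j = 0 :=
          LB_comp hS'LB hdm'LB i j (by omega)
        have hcl := congrFun (congrFun hS'claim i) j
        simp only [Pi.sub_apply] at hcl
        have hRmij : Rm i j = matComp ℓ Ψ Dm i j - matComp ℓ D'm Ψ i j := rfl
        show matComp ℓ (fun a b => dl a b + (S a b + S' a b)) Dm i j
            - matComp ℓ D'm (fun a b => dl a b + (S a b + S' a b)) i j = 0
        rw [e1, e2, e3, e4, z1, z2]
        by_cases hcase : j = i + (n + 1)
        · rw [if_pos hcase, hRmij] at hcl
          rw [sub_eq_iff_eq_add] at hcl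
          rw [hcl]
          abel
        · rw [if_neg hcase] at hcl
          have h6 : Rm i j = 0 := hSn i j (by omega)
          rw [hRmij] at h6
          rw [sub_eq_zero] at hcl h6
          rw [hcl, h6]
          abel
  obtain ⟨S, hS1, hSR⟩ := key ℓ
  set Ψ : ∀ i j, C i →ₗ[R] C j := fun a b => dl a b + S a b with hΨdef
  have hmain : matComp ℓ Ψ Dm - matComp ℓ D'm Ψ = 0 := LB_zero hC hSR
  have hmainp : ∀ i j, matComp ℓ Ψ Dm i j = matComp ℓ D'm Ψ i j := by
    intro i j
    have h0 := congrFun (congrFun hmain i) j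
    simp only [Pi.sub_apply, Pi.zero_apply] at h0
    exact sub_eq_zero.mp h0
  -- the unipotent inverse
  let pS : ℕ → ∀ i j, C i →ₗ[R] C j :=
    fun k => Nat.rec dl (fun _ ih => matComp ℓ S ih) k
  have pS0 : pS 0 = dl := rfl
  have pSsucc : ∀ k, pS (k + 1) = matComp ℓ S (pS k) := fun k => rfl
  have pScomm : ∀ k, matComp ℓ (pS k) S = matComp ℓ S (pS k) := by
    intro k
    induction k with
    | zero =>
      show matComp ℓ dl S = matComp ℓ S dl
      rw [matComp_dl_left hC, matComp_dl_right hC]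
    | succ k ih =>
      rw [pSsucc k, matComp_assoc, ih]
  have pSLB : ∀ k, LB k (pS k) := by
    intro k
    induction k with
    | zero =>
      intro i j hj
      exact dl_ne (by omega)
    | succ k ih =>
      exact LB_comp ih hS1
  have inv : ∀ K : ℕ, ∃ T : ∀ i j, C i →ₗ[R] C j,
      matComp ℓ Ψ T = dl + ((-1 : R) ^ K) • pS (K + 1)
    ∧ matComp ℓ T Ψ = dl + ((-1 : R) ^ K) • pS (K + 1) := by
    intro K
    induction K with
    | zero =>
      have hp1 : pS (0 + 1) = S := by
        show matComp ℓ S (pS 0) = S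
        rw [pS0, matComp_dl_right hC]
      refine ⟨dl, ?_, ?_⟩
      · rw [matComp_dl_right hC, hp1, pow_zero, one_smul]
        rfl
      · rw [matComp_dl_left hC, hp1, pow_zero, one_smul]
        rfl
    | succ K ih =>
      obtain ⟨T, hT1, hT2⟩ := ih
      refine ⟨T + ((-1 : R) ^ (K + 1)) • pS (K + 1), ?_, ?_⟩
      · rw [addm_right, smulm_right, hT1]
        have hP : matComp ℓ Ψ (pS (K + 1)) = pS (K + 1) + pS (K + 1 + 1) := by
          have hsplit : matComp ℓ Ψ (pS (K + 1))
              = matComp ℓ dl (pS (K + 1)) + matComp ℓ S (pS (K + 1)) := by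
            funext i j
            exact split_left (pS (K + 1)) (fun a b => by simp only [hΨdef]) i j
          have hq : pS (K + 1 + 1) = matComp ℓ S (pS (K + 1)) := pSsucc (K + 1)
          rw [hsplit, matComp_dl_left hC, hq]
        rw [hP, smul_add]
        simp only [pow_succ, mul_neg_one, neg_smul]
        abel
      · rw [addm_left, smulm_left, hT2]
        have hP : matComp ℓ (pS (K + 1)) Ψ = pS (K + 1) + pS (K + 1 + 1) := by
          have hsplit : matComp ℓ (pS (K + 1)) Ψ
              = matComp ℓ (pS (K + 1)) dl + matComp ℓ (pS (K + 1)) S := by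
            funext i j
            exact split_right (pS (K + 1)) (fun a b => by simp only [hΨdef]) i j
          have hq : pS (K + 1 + 1) = matComp ℓ S (pS (K + 1)) := pSsucc (K + 1)
          rw [hsplit, matComp_dl_right hC, hq, pScomm (K + 1)]
        rw [hP, smul_add]
        simp only [pow_succ, mul_neg_one, neg_smul]
        abel
  obtain ⟨T, hT1, hT2⟩ := inv (ℓ + 1)
  have hzero : pS (ℓ + 1 + 1) = 0 := LB_zero hC (LB_mono (by omega) (pSLB (ℓ + 2)))
  have hTmain : matComp ℓ Ψ T = dl := by
    rw [hT1, hzero, smul_zero, add_zero]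
  have hTmain' : matComp ℓ T Ψ = dl := by
    rw [hT2, hzero, smul_zero, add_zero]
  refine ⟨Ψ, T, ?_, ?_, ?_, ?_, ?_, ?_, hmainp⟩
  · intro i
    show dl i i + S i i = LinearMap.id
    rw [dl_same, hS1 i i (by omega), add_zero]
  · intro i j hj
    show dl i j + S i j = 0
    rw [dl_ne (by omega), hS1 i j (by omega), add_zero]
  · intro i
    rw [hTmain, dl_same]
  · intro i j h
    rw [hTmain, dl_ne h]
  · intro i
    rw [hTmain', dl_same]
  · intro i j h
    rw [hTmain', dl_ne h]
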